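/- arXiv:1910.12139 — 3 statements merged into one kernel-verified Lean document; each statement's English description precedes it below -/
import Mathlib

section
/- Let G be a finite simple graph on n vertices with at least one edge, and let Δ be its maximum vertex degree. Then EE(G) > e^{√Δ} + (n − 1) − √Δ. -/
open Finset Real

namespace EstradaIndexPaper

/-- The adjacency matrix of a simple graph over `ℝ` is Hermitian. -/
theorem adjMatrix_isHermitian {n : ℕ} (G : SimpleGraph (Fin n)) [DecidableRel G.Adj] :
    (G.adjMatrix ℝ).IsHermitian := by
  unfold Matrix.IsHermitian
  rw [Matrix.conjTranspose_eq_transpose_of_trivial]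
  exact G.isSymm_adjMatrix

/-- The eigenvalues of the adjacency matrix of `G`. -/
noncomputable def eig {n : ℕ} (G : SimpleGraph (Fin n)) [DecidableRel G.Adj] : Fin n → ℝ :=
  (adjMatrix_isHermitian G).eigenvalues

/-- The Estrada index of `G`: the sum of `e^{λ_i}` over the adjacency eigenvalues. -/
noncomputable def EE {n : ℕ} (G : SimpleGraph (Fin n)) [DecidableRel G.Adj] : ℝ :=
  ∑ i, Real.exp (eig G i)

/-- The largest adjacency eigenvalue `λ₁` of `G`. -/
noncomputable def lam1 {n : ℕ} (G : SimpleGraph (Fin n)) [DecidableRel G.Adj] : ℝ :=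
  ⨆ i, eig G i

/-- The Randić index `R(G) = Σ_{ij ∈ E(G)} (d(i)d(j))^{-1/2}`. -/
noncomputable def randic {n : ℕ} (G : SimpleGraph (Fin n)) [DecidableRel G.Adj] : ℝ :=
  ∑ e ∈ G.edgeFinset,
    Sym2.lift ⟨fun i j => (Real.sqrt ((G.degree i : ℝ) * (G.degree j : ℝ)))⁻¹,
      fun i j => by simp [mul_comm]⟩ e

/-- The general Randić index `R_{1/2}(G) = Σ_{ij ∈ E(G)} (d(i)d(j))^{1/2}`. -/
noncomputable def randicHalf {n : ℕ} (G : SimpleGraph (Fin n)) [DecidableRel G.Adj] : ℝ :=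
  ∑ e ∈ G.edgeFinset,
    Sym2.lift ⟨fun i j => Real.sqrt ((G.degree i : ℝ) * (G.degree j : ℝ)),
      fun i j => by simp [mul_comm]⟩ e


open Matrix

lemma sum_eig_eq_zero {n : ℕ} (G : SimpleGraph (Fin n)) [DecidableRel G.Adj] : ∑ i, eig G i = 0 := by
  classical
  have hA := adjMatrix_isHermitian G
  have h : Matrix.trace (G.adjMatrix ℝ) = ∑ i, eig G i := by
    conv_lhs => rw [hA.spectral_theorem, Unitary.conjStarAlgAut_apply]
    rw [Matrix.trace_mul_cycle, Matrix.mem_unitaryGroup_iff'.mp hA.eigenvectorUnitary.2,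
      Matrix.one_mul, Matrix.trace_diagonal]
    simp [eig]
  rw [← h, SimpleGraph.trace_adjMatrix]

lemma rayleigh {n : ℕ} (G : SimpleGraph (Fin n)) [DecidableRel G.Adj] (x : Fin n → ℝ) :
    x ⬝ᵥ (G.adjMatrix ℝ *ᵥ x) ≤ (⨆ i, eig G i) * (x ⬝ᵥ x) := by
  classical
  have hA := adjMatrix_isHermitian G
  set U : Matrix (Fin n) (Fin n) ℝ := (hA.eigenvectorUnitary : Matrix (Fin n) (Fin n) ℝ) with hU
  have hstar : star U = Uᵀ := by
    rw [Matrix.star_eq_conjTranspose, Matrix.conjTranspose_eq_transpose_of_trivial]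
  set y : Fin n → ℝ := Uᵀ *ᵥ x with hy
  have hUU : U * Uᵀ = 1 := by
    rw [← hstar]; exact Matrix.mem_unitaryGroup_iff.mp hA.eigenvectorUnitary.2
  have h1 : x ⬝ᵥ (G.adjMatrix ℝ *ᵥ x) = ∑ i, eig G i * (y i)^2 := by
    conv_lhs => rw [hA.spectral_theorem, Unitary.conjStarAlgAut_apply]
    rw [← Matrix.mulVec_mulVec, ← Matrix.mulVec_mulVec, Matrix.dotProduct_mulVec, hstar,
      Matrix.mulVec_transpose]
    simp only [dotProduct, Matrix.mulVec_diagonal, ← Matrix.mulVec_transpose, ← hy]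
    apply Finset.sum_congr rfl
    intro i _
    simp [eig]
    ring
  have h2 : x ⬝ᵥ x = ∑ i, (y i)^2 := by
    have : y ⬝ᵥ y = x ⬝ᵥ x := by
      rw [hy]
      nth_rewrite 1 [Matrix.mulVec_transpose]
      rw [← Matrix.dotProduct_mulVec, Matrix.mulVec_mulVec, hUU, Matrix.one_mulVec]
    rw [← this, dotProduct]
    exact Finset.sum_congr rfl fun i _ => (sq (y i)).symm ▸ by ring
  rw [h1, h2, Finset.mul_sum]
  apply Finset.sum_le_sum
  intro i _
  have hle : eig G i ≤ ⨆ j, eig G j := le_ciSup (Set.Finite.bddAbove (Set.finite_range _)) i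
  exact mul_le_mul_of_nonneg_right hle (sq_nonneg _)

lemma sqrt_maxDegree_le {n : ℕ} (G : SimpleGraph (Fin n)) [DecidableRel G.Adj] (hG : G.edgeFinset.Nonempty) :
    Real.sqrt (G.maxDegree) ≤ ⨆ i, eig G i := by
  classical
  obtain ⟨e, he⟩ := hG
  rw [SimpleGraph.mem_edgeFinset] at he
  induction e with
  | h a b =>
    rw [SimpleGraph.mem_edgeSet] at he
    have hne : Nonempty (Fin n) := ⟨a⟩
    obtain ⟨v, hv⟩ := G.exists_maximal_degree_vertex
    have hΔ1 : 1 ≤ G.maxDegree := by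
      have h0 : 0 < G.degree a := by
        rw [← SimpleGraph.card_neighborFinset_eq_degree]
        exact Finset.card_pos.mpr ⟨b, (SimpleGraph.mem_neighborFinset G a b).mpr he⟩
      exact le_trans h0 (G.degree_le_maxDegree a)
    set Δ : ℝ := (G.maxDegree : ℝ) with hΔ
    have hΔ1' : (1:ℝ) ≤ Δ := by rw [hΔ]; exact_mod_cast hΔ1
    have hΔ0 : 0 < Δ := by linarith
    set s : ℝ := Real.sqrt Δ with hs
    have hs0 : 0 ≤ s := Real.sqrt_nonneg _
    set x : Fin n → ℝ := fun u => if u = v then s else if G.Adj v u then 1 else 0 with hx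
    have hx0 : ∀ u, 0 ≤ x u := by
      intro u
      rw [hx]
      dsimp only
      split_ifs <;> first | exact hs0 | norm_num
    have hxv : x v = s := by rw [hx]; simp
    have hxadj : ∀ u, G.Adj v u → x u = 1 := by
      intro u hu
      rw [hx]
      dsimp only
      have huv : ¬ u = v := fun h => G.loopless.irrefl v (by rwa [h] at hu)
      rw [if_neg huv, if_pos hu]
    have hAx : ∀ u, (G.adjMatrix ℝ *ᵥ x) u = ∑ w ∈ G.neighborFinset u, x w := fun u =>
      SimpleGraph.adjMatrix_mulVec_apply G u x
    have hAx0 : ∀ u, 0 ≤ (G.adjMatrix ℝ *ᵥ x) u := by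
      intro u
      rw [hAx]
      exact Finset.sum_nonneg fun w _ => hx0 w
    have hdv : (G.degree v : ℝ) = Δ := by rw [hΔ, hv]
    have hAxv : (G.adjMatrix ℝ *ᵥ x) v = Δ := by
      rw [hAx,
        Finset.sum_congr rfl (fun w hw => hxadj w ((SimpleGraph.mem_neighborFinset G v w).mp hw)),
        Finset.sum_const, SimpleGraph.card_neighborFinset_eq_degree, nsmul_eq_mul, mul_one, hdv]
    have hAxu : ∀ u ∈ G.neighborFinset v, s ≤ (G.adjMatrix ℝ *ᵥ x) u := by
      intro u hu
      rw [hAx]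
      have hvu : v ∈ G.neighborFinset u := by
        rw [SimpleGraph.mem_neighborFinset] at hu ⊢
        exact hu.symm
      calc s = x v := hxv.symm
        _ ≤ ∑ w ∈ G.neighborFinset u, x w := Finset.single_le_sum (fun w _ => hx0 w) hvu
    have hvnot : v ∉ G.neighborFinset v := by
      rw [SimpleGraph.mem_neighborFinset]
      exact G.loopless.irrefl v
    have hlow : 2 * s * Δ ≤ x ⬝ᵥ (G.adjMatrix ℝ *ᵥ x) := by
      have h1 : ∑ u ∈ insert v (G.neighborFinset v), x u * (G.adjMatrix ℝ *ᵥ x) u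
          ≤ x ⬝ᵥ (G.adjMatrix ℝ *ᵥ x) := by
        rw [dotProduct]
        exact Finset.sum_le_sum_of_subset_of_nonneg (Finset.subset_univ _)
          (fun u _ _ => mul_nonneg (hx0 u) (hAx0 u))
      refine le_trans ?_ h1
      rw [Finset.sum_insert hvnot, hxv, hAxv]
      have h2 : Δ * s ≤ ∑ u ∈ G.neighborFinset v, x u * (G.adjMatrix ℝ *ᵥ x) u := by
        calc Δ * s = ∑ _u ∈ G.neighborFinset v, s := by
              rw [Finset.sum_const, SimpleGraph.card_neighborFinset_eq_degree, nsmul_eq_mul, hdv]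
          _ ≤ ∑ u ∈ G.neighborFinset v, x u * (G.adjMatrix ℝ *ᵥ x) u := by
              apply Finset.sum_le_sum
              intro u hu
              rw [hxadj u ((SimpleGraph.mem_neighborFinset G v u).mp hu), one_mul]
              exact hAxu u hu
      linarith
    have hxx : x ⬝ᵥ x = 2 * Δ := by
      rw [dotProduct,
        ← Finset.sum_subset (Finset.subset_univ (insert v (G.neighborFinset v)))
          (fun u _ hu => ?_)]
      · rw [Finset.sum_insert hvnot, hxv]
        have h3 : ∑ u ∈ G.neighborFinset v, x u * x u = (G.degree v : ℝ) := by
          have hone : ∀ w ∈ G.neighborFinset v, x w * x w = 1 := fun w hw => by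
            rw [hxadj w ((SimpleGraph.mem_neighborFinset G v w).mp hw)]; norm_num
          rw [Finset.sum_congr rfl hone, Finset.sum_const,
            SimpleGraph.card_neighborFinset_eq_degree, nsmul_eq_mul, mul_one]
        rw [h3, hdv, Real.mul_self_sqrt hΔ0.le]
        ring
      · have hu' : u ≠ v ∧ ¬ G.Adj v u := by
          simpa [SimpleGraph.mem_neighborFinset] using hu
        rw [hx]
        dsimp only
        rw [if_neg hu'.1, if_neg hu'.2, mul_zero]
    have hray := rayleigh G x
    rw [hxx] at hray
    nlinarith [hray, hlow]

theorem stmt2 {n : ℕ} (G : SimpleGraph (Fin n)) [DecidableRel G.Adj]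
    (hG : G.edgeFinset.Nonempty) :
    EE G > Real.exp (Real.sqrt (G.maxDegree)) + ((n : ℝ) - 1) - Real.sqrt (G.maxDegree) := by
  classical
  have hne : Nonempty (Fin n) := by
    obtain ⟨e, he⟩ := hG
    induction e with
    | h a b => exact ⟨a⟩
  have hΔ1 : 1 ≤ G.maxDegree := by
    obtain ⟨e, he⟩ := hG
    rw [SimpleGraph.mem_edgeFinset] at he
    induction e with
    | h a b =>
      rw [SimpleGraph.mem_edgeSet] at he
      have h0 : 0 < G.degree a := by
        rw [← SimpleGraph.card_neighborFinset_eq_degree]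
        exact Finset.card_pos.mpr ⟨b, (SimpleGraph.mem_neighborFinset G a b).mpr he⟩
      exact le_trans h0 (G.degree_le_maxDegree a)
  obtain ⟨i0, _, hmax⟩ := Finset.exists_max_image Finset.univ (eig G) Finset.univ_nonempty
  have hlam1 : (⨆ i, eig G i) = eig G i0 :=
    le_antisymm (ciSup_le fun i => hmax i (Finset.mem_univ i))
      (le_ciSup (Set.Finite.bddAbove (Set.finite_range _)) i0)
  set L := eig G i0 with hL
  set s := Real.sqrt ((G.maxDegree : ℝ)) with hs
  have hsL : s ≤ L := hlam1 ▸ sqrt_maxDegree_le G hG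
  have hs0 : 0 ≤ s := Real.sqrt_nonneg _
  have hs1 : 1 ≤ s := by
    rw [hs, Real.one_le_sqrt]
    exact_mod_cast hΔ1
  have hL0 : 0 < L := lt_of_lt_of_le (by linarith) hsL
  have hsum : ∑ i ∈ Finset.univ.erase i0, eig G i = -L := by
    have h := Finset.add_sum_erase Finset.univ (eig G) (Finset.mem_univ i0)
    rw [sum_eig_eq_zero G] at h
    linarith
  have hneg : ∑ i ∈ Finset.univ.erase i0, eig G i < ∑ i ∈ Finset.univ.erase i0, (0:ℝ) := by
    rw [Finset.sum_const, smul_zero, hsum]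
    linarith
  obtain ⟨j, hj, hjneg⟩ := Finset.exists_lt_of_sum_lt hneg
  have hstrict : ∑ i ∈ Finset.univ.erase i0, (1 + eig G i)
      < ∑ i ∈ Finset.univ.erase i0, Real.exp (eig G i) :=
    Finset.sum_lt_sum (fun i _ => by linarith [Real.add_one_le_exp (eig G i)])
      ⟨j, hj, by linarith [Real.add_one_lt_exp (ne_of_lt hjneg)]⟩
  have hn1 : 1 ≤ n := by
    have := Fintype.card_pos (α := Fin n)
    rwa [Fintype.card_fin] at this
  have hcard : (((Finset.univ.erase i0).card : ℕ) : ℝ) = (n : ℝ) - 1 := by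
    rw [Finset.card_erase_of_mem (Finset.mem_univ i0), Finset.card_univ, Fintype.card_fin,
      Nat.cast_sub hn1, Nat.cast_one]
  have hsum1 : ∑ i ∈ Finset.univ.erase i0, (1 + eig G i) = ((n:ℝ) - 1) - L := by
    rw [Finset.sum_add_distrib, Finset.sum_const, hsum, nsmul_eq_mul, mul_one, hcard]
    ring
  have hEE : EE G = Real.exp L + ∑ i ∈ Finset.univ.erase i0, Real.exp (eig G i) := by
    rw [EE, ← Finset.add_sum_erase Finset.univ _ (Finset.mem_univ i0)]
  have hmono : Real.exp s - s ≤ Real.exp L - L := by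
    have h1 : Real.exp L = Real.exp s * Real.exp (L - s) := by
      rw [← Real.exp_add]
      ring_nf
    nlinarith [Real.add_one_le_exp (L - s), Real.one_le_exp hs0]
  rw [hEE]
  rw [hsum1] at hstrict
  linarith


end EstradaIndexPaper
end

section
/- Let G be a finite simple graph on n ≥ 2 vertices with m edges and minimum vertex degree δ. Then EE(G) ≥ e^{2(m−δ)/(n−1)} + (n − 1) − 2(m−δ)/(n−1), with equality if and only if G has no edges (G is the empty graph on n vertices). -/
open Finset Real

namespace EstradaIndexPaper

open Matrix

theorem sum_eig_eq_trace {n : ℕ} (A : Matrix (Fin n) (Fin n) ℝ) (hA : A.IsHermitian) :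
    ∑ i, hA.eigenvalues i = A.trace := by
  nth_rewrite 2 [hA.spectral_theorem]
  rw [Unitary.conjStarAlgAut_apply, trace_mul_cycle]
  have : (star (hA.eigenvectorUnitary : Matrix (Fin n) (Fin n) ℝ)) *
      (hA.eigenvectorUnitary : Matrix (Fin n) (Fin n) ℝ) = 1 := by simp
  rw [this, Matrix.one_mul, trace_diagonal]
  simp

theorem rayleigh_s5 {n : ℕ} (A : Matrix (Fin n) (Fin n) ℝ) (hA : A.IsHermitian)
    (x : Fin n → ℝ) (μ : ℝ) (hμ : ∀ i, hA.eigenvalues i ≤ μ) :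
    x ⬝ᵥ (A *ᵥ x) ≤ μ * (x ⬝ᵥ x) := by
  set U : Matrix (Fin n) (Fin n) ℝ := (hA.eigenvectorUnitary : Matrix (Fin n) (Fin n) ℝ)
  have hU2 : U * star U = 1 := by simpa [U] using hA.eigenvectorUnitary.2.2
  set y : Fin n → ℝ := star U *ᵥ x with hy
  have hxU : ∀ z : Fin n → ℝ, x ⬝ᵥ (U *ᵥ z) = y ⬝ᵥ z := by
    intro z
    rw [Matrix.dotProduct_mulVec, hy]
    congr 1
    rw [← Matrix.mulVec_transpose]
    rfl
  have key : x ⬝ᵥ (A *ᵥ x) = ∑ i, hA.eigenvalues i * (y i)^2 := by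
    nth_rewrite 1 [hA.spectral_theorem]
    rw [Unitary.conjStarAlgAut_apply, ← Matrix.mulVec_mulVec, ← Matrix.mulVec_mulVec, hxU]
    simp only [Matrix.mulVec_diagonal, dotProduct, Function.comp, sq, ← hy]
    apply Finset.sum_congr rfl; intro i _
    simp only [RCLike.ofReal_real_eq_id, id]
    ring
  have hyy : y ⬝ᵥ y = x ⬝ᵥ x := by
    rw [hy, ← hxU (star U *ᵥ x), Matrix.mulVec_mulVec, hU2, Matrix.one_mulVec]
  calc x ⬝ᵥ (A *ᵥ x) = ∑ i, hA.eigenvalues i * (y i)^2 := key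
    _ ≤ ∑ i, μ * (y i)^2 :=
        Finset.sum_le_sum fun i _ => mul_le_mul_of_nonneg_right (hμ i) (sq_nonneg _)
    _ = μ * (y ⬝ᵥ y) := by
        rw [dotProduct, Finset.mul_sum]
        apply Finset.sum_congr rfl; intro i _; ring
    _ = μ * (x ⬝ᵥ x) := by rw [hyy]

theorem eig_zero_of_eq_zero {n : ℕ} (A : Matrix (Fin n) (Fin n) ℝ) (hA : A.IsHermitian)
    (h : A = 0) (i : Fin n) : hA.eigenvalues i = 0 := by
  have h1 := hA.mulVec_eigenvectorBasis i
  have hz : ∀ z : Fin n → ℝ, A *ᵥ z = 0 := fun z => by rw [h, Matrix.zero_mulVec]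
  rw [hz] at h1
  have h2 : (hA.eigenvectorBasis i : EuclideanSpace ℝ (Fin n)) ≠ 0 :=
    hA.eigenvectorBasis.orthonormal.ne_zero i
  rcases smul_eq_zero.1 h1.symm with h | h
  · exact h
  · exact absurd (by ext j; simpa using congrFun h j) h2

theorem eq_zero_of_eig_zero {n : ℕ} (A : Matrix (Fin n) (Fin n) ℝ) (hA : A.IsHermitian)
    (h : ∀ i, hA.eigenvalues i = 0) : A = 0 := by
  have : Matrix.diagonal (RCLike.ofReal ∘ hA.eigenvalues : Fin n → ℝ) = 0 := by
    ext i j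
    by_cases hij : i = j <;> simp [Matrix.diagonal, hij, h]
  rw [hA.spectral_theorem, this, Unitary.conjStarAlgAut_apply, Matrix.mul_zero, Matrix.zero_mul]

theorem exp_sub_mono {t l : ℝ} (h0 : 0 ≤ t) (h : t ≤ l) :
    Real.exp t - t ≤ Real.exp l - l := by
  have h1 : (l - t) + 1 ≤ Real.exp (l - t) := Real.add_one_le_exp _
  have h2 : (1 : ℝ) ≤ Real.exp t := Real.one_le_exp h0
  have h3 : Real.exp l = Real.exp t * Real.exp (l - t) := by
    rw [← Real.exp_add]; ring_nf
  nlinarith [Real.exp_pos t]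

theorem stmt5 {n : ℕ} (hn : 2 ≤ n) (G : SimpleGraph (Fin n)) [DecidableRel G.Adj]
    (m δ : ℝ) (hm : m = G.edgeFinset.card) (hδ : δ = G.minDegree) :
    EE G ≥ Real.exp (2 * (m - δ) / ((n : ℝ) - 1)) + ((n : ℝ) - 1) -
      2 * (m - δ) / ((n : ℝ) - 1) ∧
    (EE G = Real.exp (2 * (m - δ) / ((n : ℝ) - 1)) + ((n : ℝ) - 1) -
      2 * (m - δ) / ((n : ℝ) - 1) ↔ G = ⊥) := by
  have hne : Nonempty (Fin n) := ⟨⟨0, by omega⟩⟩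
  set A : Matrix (Fin n) (Fin n) ℝ := G.adjMatrix ℝ with hA_def
  have hA : A.IsHermitian := adjMatrix_isHermitian G
  have heigdef : eig G = hA.eigenvalues := rfl
  set t : ℝ := 2 * (m - δ) / ((n : ℝ) - 1) with ht_def
  have hn1 : (0:ℝ) < (n:ℝ) - 1 := by
    have : (2:ℝ) ≤ n := by exact_mod_cast hn
    linarith
  -- trace zero
  have hsum : ∑ i, eig G i = 0 := by
    rw [heigdef, sum_eig_eq_trace A hA, hA_def, SimpleGraph.trace_adjMatrix]
  -- degree facts
  have hAsum : ∀ i, ∑ j, A i j = (G.degree i : ℝ) := by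
    intro i
    simp [hA_def, SimpleGraph.adjMatrix_apply, SimpleGraph.degree,
      SimpleGraph.neighborFinset_eq_filter, Finset.sum_boole]
  have h2m : ∑ i, (G.degree i : ℝ) = 2 * m := by
    rw [hm]
    exact_mod_cast congrArg (Nat.cast : ℕ → ℝ) (SimpleGraph.sum_degrees_eq_twice_card_edges G)
  obtain ⟨v, hv⟩ := G.exists_minimal_degree_vertex
  have hδv : (G.degree v : ℝ) = δ := by rw [hδ, hv]
  have hδle : ∀ i, δ ≤ (G.degree i : ℝ) := by
    intro i
    rw [hδ]
    exact_mod_cast G.minDegree_le_degree i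
  have hδ0 : 0 ≤ δ := by rw [hδ]; positivity
  have hmδ : δ ≤ m := by
    have h1 : ∑ _i : Fin n, δ ≤ ∑ i, (G.degree i : ℝ) := Finset.sum_le_sum fun i _ => hδle i
    rw [Finset.sum_const, Finset.card_univ, Fintype.card_fin, nsmul_eq_mul, h2m] at h1
    have h2 : (2:ℝ) ≤ n := by exact_mod_cast hn
    nlinarith
  have ht0 : 0 ≤ t := by
    rw [ht_def]
    apply div_nonneg (by linarith) (le_of_lt hn1)
  -- Rayleigh vector
  set x : Fin n → ℝ := fun i => if i = v then 0 else 1 with hx_def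
  have hxx : x ⬝ᵥ x = (n:ℝ) - 1 := by
    have hxi : ∀ i, x i * x i = 1 - (if i = v then (1:ℝ) else 0) := by
      intro i; by_cases hi : i = v <;> simp [hx_def, hi]
    rw [dotProduct]
    simp_rw [hxi]
    rw [Finset.sum_sub_distrib, Finset.sum_const, Finset.sum_ite_eq']
    simp
  have hxAx : x ⬝ᵥ (A *ᵥ x) = 2*m - 2*δ := by
    have hcolsum : ∑ i, A i v = (G.degree v : ℝ) := by
      rw [← hAsum v]
      apply Finset.sum_congr rfl
      intro i _
      simp [hA_def, SimpleGraph.adjMatrix_apply, SimpleGraph.adj_comm]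
    have step1 : x ⬝ᵥ (A *ᵥ x) = ∑ i, ∑ j, x i * (A i j * x j) := by
      simp [dotProduct, Matrix.mulVec, Finset.mul_sum]
    have step2 : ∀ i j, x i * (A i j * x j) =
        A i j - (if i = v then A i j else 0) - (if j = v then A i j else 0)
          + (if i = v then (if j = v then A i j else 0) else 0) := by
      intro i j
      by_cases hi : i = v <;> by_cases hj : j = v <;> simp [hx_def, hi, hj]
    rw [step1]
    simp_rw [step2]
    have S1 : ∑ i, ∑ j, A i j = 2 * m := by
      rw [← h2m]; exact Finset.sum_congr rfl fun i _ => hAsum i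
    have S2 : ∑ i : Fin n, ∑ j, (if i = v then A i j else 0) = δ := by
      have : ∀ i : Fin n, ∑ j, (if i = v then A i j else 0)
          = (if i = v then (G.degree i : ℝ) else 0) := by
        intro i
        by_cases hi : i = v
        · subst hi; simp only [if_true]; exact hAsum i
        · simp [hi]
      simp_rw [this]
      rw [Finset.sum_ite_eq']
      simp [hδv]
    have S3 : ∑ i : Fin n, ∑ j, (if j = v then A i j else 0) = δ := by
      have : ∀ i : Fin n, ∑ j, (if j = v then A i j else 0) = A i v := by
        intro i; rw [Finset.sum_ite_eq']; simp
      simp_rw [this]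
      rw [hcolsum, hδv]
    have S4 : ∑ i : Fin n, ∑ j, (if i = v then (if j = v then A i j else 0) else 0) = 0 := by
      have h4 : ∀ i : Fin n, ∑ j, (if i = v then (if j = v then A i j else 0) else 0) = 0 := by
        intro i
        by_cases hi : i = v
        · subst hi
          simp only [if_true]
          rw [Finset.sum_ite_eq']
          simp [hA_def]
        · simp [hi]
      simp_rw [h4]
      simp
    calc ∑ i, ∑ j, (((A i j - if i = v then A i j else 0) - if j = v then A i j else 0) +
          if i = v then if j = v then A i j else 0 else 0)
        = (∑ i, ∑ j, A i j) - (∑ i : Fin n, ∑ j, (if i = v then A i j else 0))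
          - (∑ i : Fin n, ∑ j, (if j = v then A i j else 0))
          + ∑ i : Fin n, ∑ j, (if i = v then (if j = v then A i j else 0) else 0) := by
          simp_rw [Finset.sum_add_distrib, Finset.sum_sub_distrib]
      _ = 2*m - 2*δ := by rw [S1, S2, S3, S4]; ring
  -- max eigenvalue
  obtain ⟨k, -, hk⟩ := Finset.exists_max_image Finset.univ (eig G) ⟨v, Finset.mem_univ v⟩
  have hk' : ∀ i, eig G i ≤ eig G k := fun i => hk i (Finset.mem_univ i)
  have hk0 : 0 ≤ eig G k := by
    have h1 : ∑ i : Fin n, eig G i ≤ ∑ _i : Fin n, eig G k :=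
      Finset.sum_le_sum fun i _ => hk' i
    rw [hsum, Finset.sum_const, Finset.card_univ, Fintype.card_fin, nsmul_eq_mul] at h1
    have h2 : (2:ℝ) ≤ n := by exact_mod_cast hn
    nlinarith
  have htk : t ≤ eig G k := by
    have hr := rayleigh_s5 A hA x (eig G k) (fun i => hk' i)
    rw [hxAx, hxx] at hr
    rw [ht_def, div_le_iff₀ hn1]
    linarith
  -- sum decomposition
  have hEdec : EE G = Real.exp (eig G k) +
      ∑ i ∈ Finset.univ.erase k, Real.exp (eig G i) :=
    (Finset.add_sum_erase _ _ (Finset.mem_univ k)).symm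
  have hcard : ((Finset.univ.erase k).card : ℝ) = (n:ℝ) - 1 := by
    rw [Finset.card_erase_of_mem (Finset.mem_univ k), Finset.card_univ, Fintype.card_fin]
    have : 1 ≤ n := by omega
    push_cast [this]
    ring
  have hsumerase : ∑ i ∈ Finset.univ.erase k, eig G i = - eig G k := by
    have h1 := Finset.add_sum_erase Finset.univ (eig G) (Finset.mem_univ k)
    rw [hsum] at h1
    linarith
  have hsum1 : ∑ i ∈ Finset.univ.erase k, (1 + eig G i) = ((n:ℝ) - 1) - eig G k := by
    rw [Finset.sum_add_distrib, Finset.sum_const, hsumerase, nsmul_eq_mul, mul_one, hcard]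
    ring
  have hterm_le : ∀ i ∈ Finset.univ.erase k, 1 + eig G i ≤ Real.exp (eig G i) := by
    intro i _
    have := Real.add_one_le_exp (eig G i)
    linarith
  have hlow : ∑ i ∈ Finset.univ.erase k, (1 + eig G i)
      ≤ ∑ i ∈ Finset.univ.erase k, Real.exp (eig G i) :=
    Finset.sum_le_sum hterm_le
  have hmono := exp_sub_mono ht0 htk
  have hmain : EE G ≥ Real.exp t + ((n : ℝ) - 1) - t := by
    rw [hEdec]
    have := hsum1
    linarith
  refine ⟨hmain, ?_, ?_⟩
  · -- equality implies G = ⊥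
    intro heq
    have heqsum : ∑ i ∈ Finset.univ.erase k, Real.exp (eig G i)
        = ∑ i ∈ Finset.univ.erase k, (1 + eig G i) := by
      rw [hEdec] at heq
      rw [hsum1]
      linarith
    have hterm_eq : ∀ i ∈ Finset.univ.erase k, 1 + eig G i = Real.exp (eig G i) :=
      (Finset.sum_eq_sum_iff_of_le hterm_le).1 heqsum.symm
    have heig0 : ∀ i, eig G i = 0 := by
      have hzero : ∀ i ∈ Finset.univ.erase k, eig G i = 0 := by
        intro i hi
        by_contra hne'
        have := Real.add_one_lt_exp hne'
        have := hterm_eq i hi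
        linarith
      intro i
      by_cases hik : i = k
      · subst hik
        have : ∑ i ∈ Finset.univ.erase i, eig G i = 0 :=
          Finset.sum_eq_zero hzero
        rw [this] at hsumerase
        linarith
      · exact hzero i (Finset.mem_erase.2 ⟨hik, Finset.mem_univ i⟩)
    have hA0 : A = 0 := eq_zero_of_eig_zero A hA heig0
    ext i j
    simp only [SimpleGraph.bot_adj, iff_false]
    intro hadj
    have h1 : A i j = 0 := by rw [hA0]; rfl
    rw [hA_def, SimpleGraph.adjMatrix_apply, if_pos hadj] at h1
    exact one_ne_zero h1
  · -- G = ⊥ implies equality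
    intro hG
    have hA0 : A = 0 := by
      ext i j
      simp [hA_def, SimpleGraph.adjMatrix_apply, hG]
    have heig0 : ∀ i, eig G i = 0 := fun i => eig_zero_of_eq_zero A hA hA0 i
    have hEEn : EE G = n := by
      unfold EE
      simp [heig0]
    have hnoadj : ∀ a b, ¬ G.Adj a b := by
      intro a b h
      rw [hG] at h
      exact h
    have hedge : G.edgeFinset = ∅ := by
      ext e
      simp only [SimpleGraph.mem_edgeFinset, Finset.notMem_empty, iff_false]
      refine e.ind ?_
      intro a b
      rw [SimpleGraph.mem_edgeSet]
      exact hnoadj a b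
    have hm0 : m = 0 := by
      rw [hm, hedge]
      simp
    have hδ0' : δ = 0 := by
      have hdv : G.degree v = 0 := by
        rw [← SimpleGraph.card_neighborFinset_eq_degree, Finset.card_eq_zero]
        ext w
        simp only [SimpleGraph.mem_neighborFinset, Finset.notMem_empty, iff_false]
        exact hnoadj v w
      rw [← hδv, hdv]
      simp
    have ht0' : t = 0 := by
      rw [ht_def, hm0, hδ0']
      simp
    rw [hEEn, ht0', Real.exp_zero]
    ring


end EstradaIndexPaper
end

section
/- Let G be a connected unicyclic finite simple graph on n vertices (i.e., G is connected with exactly n edges). Then EE(G) > e^{2} + (n − 3). -/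
open Finset Real

namespace EstradaIndexPaper

open Matrix

private theorem unitary_dot {m : Type*} [Fintype m] [DecidableEq m]
    (U : Matrix m m ℝ) (hU : U ∈ unitaryGroup m ℝ) (y z : m → ℝ) :
    (U *ᵥ y) ⬝ᵥ (U *ᵥ z) = y ⬝ᵥ z := by
  rw [dotProduct_comm, dotProduct_mulVec, vecMul_mulVec,
    show Uᵀ * U = 1 by
      rw [← Matrix.conjTranspose_eq_transpose_of_trivial]
      exact mem_unitaryGroup_iff'.mp hU,
    vecMul_one, dotProduct_comm]

private theorem sum_eig_trace {m : Type*} [Fintype m] [DecidableEq m] {A : Matrix m m ℝ}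
    (hA : A.IsHermitian) : ∑ i, hA.eigenvalues i = A.trace := by
  conv_rhs => rw [hA.spectral_theorem, Unitary.conjStarAlgAut_apply]
  rw [trace_mul_comm, ← mul_assoc, Unitary.coe_star_mul_self, one_mul, trace_diagonal]
  simp

private theorem sum_sq_eig_trace {m : Type*} [Fintype m] [DecidableEq m] {A : Matrix m m ℝ}
    (hA : A.IsHermitian) : ∑ i, (hA.eigenvalues i)^2 = (A * A).trace := by
  conv_rhs => rw [hA.spectral_theorem, Unitary.conjStarAlgAut_apply]
  rw [show ((hA.eigenvectorUnitary : Matrix m m ℝ) * diagonal (RCLike.ofReal ∘ hA.eigenvalues) *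
      star (hA.eigenvectorUnitary : Matrix m m ℝ)) *
      ((hA.eigenvectorUnitary : Matrix m m ℝ) * diagonal (RCLike.ofReal ∘ hA.eigenvalues) *
      star (hA.eigenvectorUnitary : Matrix m m ℝ)) =
      (hA.eigenvectorUnitary : Matrix m m ℝ) *
      (diagonal (RCLike.ofReal ∘ hA.eigenvalues) * diagonal (RCLike.ofReal ∘ hA.eigenvalues)) *
      star (hA.eigenvectorUnitary : Matrix m m ℝ) by
    rw [mul_assoc, mul_assoc, mul_assoc, mul_assoc]
    congr 1
    rw [← mul_assoc (star _), Unitary.coe_star_mul_self, one_mul, ← mul_assoc]]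
  rw [trace_mul_comm, ← mul_assoc, Unitary.coe_star_mul_self, one_mul,
    diagonal_mul_diagonal, trace_diagonal]
  simp [sq]

private theorem quad_form {m : Type*} [Fintype m] [DecidableEq m] {A : Matrix m m ℝ}
    (hA : A.IsHermitian) (x : m → ℝ) :
    x ⬝ᵥ (A *ᵥ x) = ∑ i, hA.eigenvalues i *
      ((star (hA.eigenvectorUnitary : Matrix m m ℝ) *ᵥ x) i)^2 := by
  set U := (hA.eigenvectorUnitary : Matrix m m ℝ) with hUdef
  set y := star U *ᵥ x with hy
  have hx : x = U *ᵥ y := by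
    rw [hy, mulVec_mulVec, (mem_unitaryGroup_iff.mp hA.eigenvectorUnitary.2 :
      U * star U = 1), one_mulVec]
  conv_lhs => rw [hA.spectral_theorem, Unitary.conjStarAlgAut_apply, ← hUdef, mul_assoc, ← mulVec_mulVec]
  rw [show (diagonal (RCLike.ofReal ∘ hA.eigenvalues) * star U) *ᵥ x
      = diagonal (RCLike.ofReal ∘ hA.eigenvalues) *ᵥ y by rw [← mulVec_mulVec, hy]]
  conv_lhs => rw [hx]
  rw [unitary_dot U hA.eigenvectorUnitary.2]
  simp [dotProduct, mulVec_diagonal, sq]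
  exact Finset.sum_congr rfl fun i _ => by ring

private theorem norm_form {m : Type*} [Fintype m] [DecidableEq m] {A : Matrix m m ℝ}
    (hA : A.IsHermitian) (x : m → ℝ) :
    x ⬝ᵥ x = ∑ i, ((star (hA.eigenvectorUnitary : Matrix m m ℝ) *ᵥ x) i)^2 := by
  set U := (hA.eigenvectorUnitary : Matrix m m ℝ) with hUdef
  set y := star U *ᵥ x with hy
  have hx : x = U *ᵥ y := by
    rw [hy, mulVec_mulVec, (mem_unitaryGroup_iff.mp hA.eigenvectorUnitary.2 :
      U * star U = 1), one_mulVec]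
  conv_lhs => rw [hx]
  rw [unitary_dot U hA.eigenvectorUnitary.2]
  simp [dotProduct, sq]


theorem stmt6 {n : ℕ} (G : SimpleGraph (Fin n)) [DecidableRel G.Adj]
    (hG : G.Connected) (huni : G.edgeFinset.card = n) :
    EE G > Real.exp 2 + ((n : ℝ) - 3) := by
  classical
  have hne : Nonempty (Fin n) := hG.nonempty
  have hn : 0 < n := Fin.pos_iff_nonempty.mpr hne
  set A := G.adjMatrix ℝ with hAdef
  have hA := adjMatrix_isHermitian G
  -- sum of eigenvalues is zero
  have htr : ∑ i, eig G i = 0 := by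
    rw [show (eig G) = hA.eigenvalues from rfl, sum_eig_trace hA]
    simp [Matrix.trace]
  -- sum of squares of eigenvalues is 2n
  have hdegsum : ∑ v, (G.degree v : ℝ) = 2 * n := by
    rw [← Nat.cast_sum]
    norm_cast
    rw [G.sum_degrees_eq_twice_card_edges, huni]
  have hsq : ∑ i, (eig G i)^2 = 2 * n := by
    rw [show (eig G) = hA.eigenvalues from rfl, sum_sq_eig_trace hA]
    rw [Matrix.trace]
    have : ∀ i, (A * A).diag i = (G.degree i : ℝ) := fun i =>
      G.adjMatrix_mul_self_apply_self i
    rw [Finset.sum_congr rfl fun i _ => this i]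
    exact hdegsum
  -- Rayleigh quotient with the all-ones vector
  set x : Fin n → ℝ := fun _ => 1 with hxdef
  set y := star (hA.eigenvectorUnitary : Matrix (Fin n) (Fin n) ℝ) *ᵥ x with hydef
  have hray1 : ∑ i, eig G i * (y i)^2 = 2 * n := by
    rw [show (eig G) = hA.eigenvalues from rfl, ← quad_form hA x]
    have hmv : A *ᵥ x = fun v => (G.degree v : ℝ) := by
      funext v
      simp [hAdef, hxdef]
    rw [hmv]
    simpa [dotProduct, hxdef] using hdegsum
  have hray2 : ∑ i, (y i)^2 = n := by
    rw [← norm_form hA x]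
    simp [dotProduct, hxdef]
  -- the maximal eigenvalue
  obtain ⟨i0, hi0⟩ : ∃ i0, ∀ i, eig G i ≤ eig G i0 := Finite.exists_max (eig G)
  have hmax : 2 ≤ eig G i0 := by
    have hle : ∑ i, eig G i * (y i)^2 ≤ ∑ i, eig G i0 * (y i)^2 :=
      Finset.sum_le_sum fun i _ => mul_le_mul_of_nonneg_right (hi0 i) (sq_nonneg _)
    rw [hray1, ← Finset.mul_sum, hray2] at hle
    have hn' : (0:ℝ) < n := by exact_mod_cast hn
    nlinarith
  -- some other eigenvalue is nonzero
  obtain ⟨j, hji, hj0⟩ : ∃ j, j ≠ i0 ∧ eig G j ≠ 0 := by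
    by_contra h
    push_neg at h
    have h1 : ∑ i, eig G i = eig G i0 :=
      Finset.sum_eq_single i0 (fun i _ hi => h i hi) (by simp)
    have h2 : ∑ i, (eig G i)^2 = (eig G i0)^2 :=
      Finset.sum_eq_single i0 (fun i _ hi => by rw [h i hi]; ring) (by simp)
    rw [htr] at h1
    rw [hsq, ← h1] at h2
    have hn' : (0:ℝ) < n := by exact_mod_cast hn
    nlinarith
  -- assemble
  have hsplit : EE G = Real.exp (eig G i0) + ∑ i ∈ Finset.univ.erase i0,
      Real.exp (eig G i) := by
    rw [EE, ← Finset.add_sum_erase _ _ (Finset.mem_univ i0)]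
  have hstrict : ∑ i ∈ Finset.univ.erase i0, (eig G i + 1) <
      ∑ i ∈ Finset.univ.erase i0, Real.exp (eig G i) := by
    apply Finset.sum_lt_sum (fun i _ => Real.add_one_le_exp _)
    exact ⟨j, Finset.mem_erase.mpr ⟨hji, Finset.mem_univ j⟩,
      by simpa using Real.add_one_lt_exp hj0⟩
  have hsum_erase : ∑ i ∈ Finset.univ.erase i0, (eig G i + 1) =
      -(eig G i0) + ((n:ℝ) - 1) := by
    rw [Finset.sum_add_distrib, Finset.sum_erase_eq_sub (Finset.mem_univ i0), htr]
    rw [Finset.sum_const, Finset.card_erase_of_mem (Finset.mem_univ i0), Finset.card_univ,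
      Fintype.card_fin, nsmul_eq_mul]
    push_cast [Nat.cast_sub hn]
    ring
  have hexp : Real.exp 2 - 2 ≤ Real.exp (eig G i0) - eig G i0 := by
    have h1 : Real.exp (eig G i0 - 2) * Real.exp 2 = Real.exp (eig G i0) := by
      rw [← Real.exp_add]; ring_nf
    have h2 : eig G i0 - 2 + 1 ≤ Real.exp (eig G i0 - 2) := Real.add_one_le_exp _
    have h3 : (1:ℝ) ≤ Real.exp 2 := Real.one_le_exp (by norm_num)
    nlinarith
  rw [hsplit]
  calc Real.exp 2 + ((n:ℝ) - 3)
      ≤ Real.exp (eig G i0) + (-(eig G i0) + ((n:ℝ) - 1)) := by linarith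
    _ = Real.exp (eig G i0) + ∑ i ∈ Finset.univ.erase i0, (eig G i + 1) := by
        rw [hsum_erase]
    _ < _ := by linarith


end EstradaIndexPaper
end
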